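/- Let n ≥ 1, let a ≤ b be real numbers with b − a < 1, and for k = 1,…,n let r_k > 0 and φ_k ∈ [a,b] be real numbers. Set z_k = r_k·exp(iπφ_k) ∈ ℂ, Z = z_1 + ⋯ + z_n, m = r_1 + ⋯ + r_n, and φ̄ = (Σ r_kφ_k)/m. Let θ ∈ [a,b] be the unique real number with Z = |Z|·exp(iπθ). Then 0 ≤ log m − log|Z| ≤ −log(cos(π(b−a)/2)) and |φ̄ − θ| ≤ b − a. -/

import Mathlib

open Complex Filter Finset

/-- With `z_k = r_k · exp(iπφ_k)`, `Z = Σ z_k`, `m = Σ r_k`, `φ̄ = (Σ r_k φ_k)/m` and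
`θ ∈ [a,b]` the unique real with `Z = |Z|·exp(iπθ)`, one has
`0 ≤ log m − log|Z| ≤ −log(cos(π(b−a)/2))` and `|φ̄ − θ| ≤ b − a`. -/
theorem stmt2 (n : ℕ) (hn : 1 ≤ n) (a b : ℝ) (hab : a ≤ b) (hba : b - a < 1)
    (r φ : Fin n → ℝ) (hr : ∀ k, 0 < r k) (hφ : ∀ k, φ k ∈ Set.Icc a b)
    (Z : ℂ) (hZdef : Z = ∑ k, (r k : ℂ) * Complex.exp ((Real.pi * φ k : ℝ) * Complex.I))
    (m : ℝ) (hm : m = ∑ k, r k)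
    (φbar : ℝ) (hφbar : φbar = (∑ k, r k * φ k) / m)
    (θ : ℝ) (hθ : θ ∈ Set.Icc a b)
    (hZθ : Z = (‖Z‖ : ℂ) * Complex.exp ((Real.pi * θ : ℝ) * Complex.I)) :
    0 ≤ Real.log m - Real.log ‖Z‖ ∧
    Real.log m - Real.log ‖Z‖ ≤ -Real.log (Real.cos (Real.pi * (b - a) / 2)) ∧
    |φbar - θ| ≤ b - a := by
  have hpi := Real.pi_pos
  have : Nonempty (Fin n) := ⟨⟨0, hn⟩⟩
  set c : ℝ := (a + b) / 2 with hc
  have hmpos : 0 < m := by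
    rw [hm]; exact Finset.sum_pos (fun k _ => hr k) Finset.univ_nonempty
  have cospos : 0 < Real.cos (Real.pi * (b - a) / 2) := by
    apply Real.cos_pos_of_mem_Ioo
    constructor
    · nlinarith
    · nlinarith
  -- upper bound on |Z|
  have hZle : ‖Z‖ ≤ m := by
    rw [hZdef, hm]
    refine le_trans (norm_sum_le _ _) (le_of_eq ?_)
    apply Finset.sum_congr rfl
    intro k _
    simp [norm_mul, Complex.norm_exp, abs_of_pos (hr k)]
  -- cos comparison
  have hcos : ∀ k, Real.cos (Real.pi * (b - a) / 2) ≤ Real.cos (Real.pi * (φ k - c)) := by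
    intro k
    obtain ⟨h1, h2⟩ := hφ k
    rw [← Real.cos_abs (Real.pi * (φ k - c))]
    apply Real.cos_le_cos_of_nonneg_of_le_pi (abs_nonneg _)
    · nlinarith
    · rw [abs_mul, abs_of_pos hpi]
      have : |φ k - c| ≤ (b - a) / 2 := by
        rw [abs_le]; constructor <;> [linarith; linarith]
      nlinarith
  -- lower bound on |Z|
  have key : m * Real.cos (Real.pi * (b - a) / 2) ≤
      (Z * Complex.exp (-((Real.pi * c : ℝ) * Complex.I))).re := by
    rw [hZdef, hm, Finset.sum_mul, Finset.sum_mul, Complex.re_sum]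
    apply Finset.sum_le_sum
    intro k _
    have hre : ((r k : ℂ) * Complex.exp ((Real.pi * φ k : ℝ) * Complex.I) *
        Complex.exp (-((Real.pi * c : ℝ) * Complex.I))).re
        = r k * Real.cos (Real.pi * (φ k - c)) := by
      rw [mul_assoc, ← Complex.exp_add]
      have he : ((Real.pi * φ k : ℝ) : ℂ) * Complex.I + -(((Real.pi * c : ℝ) : ℂ) * Complex.I)
          = ((Real.pi * (φ k - c) : ℝ) : ℂ) * Complex.I := by
        push_cast; ring
      rw [he, Complex.re_ofReal_mul, Complex.exp_ofReal_mul_I_re]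
    rw [hre]
    exact mul_le_mul_of_nonneg_left (hcos k) (hr k).le
  have habs : (Z * Complex.exp (-((Real.pi * c : ℝ) * Complex.I))).re ≤ ‖Z‖ := by
    refine le_trans (Complex.re_le_norm _) (le_of_eq ?_)
    simp [norm_mul, Complex.norm_exp]
  have hZlow : m * Real.cos (Real.pi * (b - a) / 2) ≤ ‖Z‖ := key.trans habs
  have hZpos : 0 < ‖Z‖ := lt_of_lt_of_le (mul_pos hmpos cospos) hZlow
  refine ⟨?_, ?_, ?_⟩
  · have := Real.log_le_log hZpos hZle
    linarith
  · have h := Real.log_le_log (mul_pos hmpos cospos) hZlow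
    rw [Real.log_mul hmpos.ne' cospos.ne'] at h
    linarith
  · have hsum1 : m * a ≤ ∑ k, r k * φ k := by
      rw [hm, Finset.sum_mul]
      exact Finset.sum_le_sum fun k _ => mul_le_mul_of_nonneg_left (hφ k).1 (hr k).le
    have hsum2 : (∑ k, r k * φ k) ≤ m * b := by
      rw [hm, Finset.sum_mul]
      exact Finset.sum_le_sum fun k _ => mul_le_mul_of_nonneg_left (hφ k).2 (hr k).le
    have h1 : a ≤ φbar := by
      rw [hφbar, le_div_iff₀ hmpos]; linarith
    have h2 : φbar ≤ b := by
      rw [hφbar, div_le_iff₀ hmpos]; linarith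
    obtain ⟨ht1, ht2⟩ := hθ
    rw [abs_le]
    constructor <;> linarith
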